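/- The cone angle of a closed rectifiable curve K from any point p not on K is at most the total curvature of K: the length of the radial projection of K to the unit sphere centered at p is at most the total curvature of K. -/

import Mathlib

open Set
open scoped ENNReal

noncomputable section

/-- The total curvature (in the sense of Milnor) of a closed curve `K`, given as a
`1`-periodic map `ℝ → ℝ³`: the supremum, over all polygons inscribed in one period
of `K` (with nondegenerate edges), of the sum of the exterior angles. -/
def totalCurvature (K : ℝ → EuclideanSpace ℝ (Fin 3)) : ℝ≥0∞ :=
  ⨆ (n : ℕ) (t : Fin (n + 3) → ℝ) (_ : StrictMono t)
    (_ : ∀ i, t i ∈ Ico (0 : ℝ) 1) (_ : ∀ i, K (t (i + 1)) ≠ K (t i)),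
    ∑ i : Fin (n + 3),
      ENNReal.ofReal
        (InnerProductGeometry.angle
          (K (t (i + 1)) - K (t i)) (K (t (i + 2)) - K (t (i + 1))))

section Auxiliary

open InnerProductGeometry
open scoped RealInnerProductSpace

variable {V : Type*} [NormedAddCommGroup V] [InnerProductSpace ℝ V]

private lemma unit_perp_norm {x y : V} (hx : ‖x‖ = 1) (hy : ‖y‖ = 1) :
    ‖x - ⟪x, y⟫ • y‖ ^ 2 = 1 - ⟪x, y⟫ ^ 2 := by
  rw [norm_sub_sq_real, real_inner_smul_right, norm_smul, hx, hy]
  simp [mul_pow, sq_abs]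
  ring

private lemma unit_angle_triangle {x y z : V} (hx : ‖x‖ = 1) (hy : ‖y‖ = 1) (hz : ‖z‖ = 1) :
    angle x z ≤ angle x y + angle y z := by
  rcases le_or_gt Real.pi (angle x y + angle y z) with h | h
  · exact (angle_le_pi x z).trans h
  have hxy : Real.cos (angle x y) = ⟪x, y⟫ := by rw [cos_angle, hx, hy]; ring_nf
  have hyz : Real.cos (angle y z) = ⟪y, z⟫ := by rw [cos_angle, hy, hz]; ring_nf
  have hxz : Real.cos (angle x z) = ⟪x, z⟫ := by rw [cos_angle, hx, hz]; ring_nf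
  have hs1 : Real.sin (angle x y) ^ 2 = 1 - ⟪x, y⟫ ^ 2 := by
    rw [Real.sin_sq, hxy]
  have hs2 : Real.sin (angle y z) ^ 2 = 1 - ⟪y, z⟫ ^ 2 := by
    rw [Real.sin_sq, hyz]
  have hsn1 : 0 ≤ Real.sin (angle x y) :=
    Real.sin_nonneg_of_nonneg_of_le_pi (angle_nonneg _ _) (angle_le_pi _ _)
  have hsn2 : 0 ≤ Real.sin (angle y z) :=
    Real.sin_nonneg_of_nonneg_of_le_pi (angle_nonneg _ _) (angle_le_pi _ _)
  have hX : ‖x - ⟪x, y⟫ • y‖ = Real.sin (angle x y) := by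
    have h0 := unit_perp_norm hx hy
    nlinarith [norm_nonneg (x - ⟪x, y⟫ • y)]
  have hZ : ‖z - ⟪y, z⟫ • y‖ = Real.sin (angle y z) := by
    have h0 := unit_perp_norm hz hy
    rw [real_inner_comm y z] at h0
    nlinarith [norm_nonneg (z - ⟪y, z⟫ • y)]
  have hinner : ⟪x, z⟫ = ⟪x - ⟪x, y⟫ • y, z - ⟪y, z⟫ • y⟫ + ⟪x, y⟫ * ⟪y, z⟫ := by
    simp only [inner_sub_left, inner_sub_right, real_inner_smul_left, real_inner_smul_right,
      real_inner_self_eq_norm_sq, hy, one_pow]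
    ring
  have hcs : ⟪x - ⟪x, y⟫ • y, z - ⟪y, z⟫ • y⟫ ≥
      -(Real.sin (angle x y) * Real.sin (angle y z)) := by
    have h0 := real_inner_le_norm (x - ⟪x, y⟫ • y) (-(z - ⟪y, z⟫ • y))
    rw [inner_neg_right, norm_neg, hX, hZ] at h0
    linarith
  have hcos : Real.cos (angle x y + angle y z) ≤ Real.cos (angle x z) := by
    rw [Real.cos_add, hxy, hyz, hxz, hinner]
    linarith
  by_contra hcon
  push_neg at hcon
  have := Real.strictAntiOn_cos
    ⟨add_nonneg (angle_nonneg _ _) (angle_nonneg _ _), h.le⟩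
    ⟨angle_nonneg x z, angle_le_pi x z⟩ hcon
  linarith

private lemma angle_triangle' (x y z : V) :
    angle x z ≤ angle x y + angle y z := by
  rcases eq_or_ne x 0 with rfl | hx
  · rw [angle_zero_left, angle_zero_left]
    linarith [angle_nonneg y z]
  rcases eq_or_ne z 0 with rfl | hz
  · rw [angle_zero_right, angle_zero_right]
    linarith [angle_nonneg x y]
  rcases eq_or_ne y 0 with rfl | hy
  · rw [angle_zero_right, angle_zero_left]
    linarith [angle_le_pi x z]
  have px : (0:ℝ) < ‖x‖⁻¹ := inv_pos.mpr (norm_pos_iff.mpr hx)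
  have py : (0:ℝ) < ‖y‖⁻¹ := inv_pos.mpr (norm_pos_iff.mpr hy)
  have pz : (0:ℝ) < ‖z‖⁻¹ := inv_pos.mpr (norm_pos_iff.mpr hz)
  have h1 : angle x z = angle (‖x‖⁻¹ • x) (‖z‖⁻¹ • z) := by
    rw [angle_smul_left_of_pos _ _ px, angle_smul_right_of_pos _ _ pz]
  have h2 : angle x y = angle (‖x‖⁻¹ • x) (‖y‖⁻¹ • y) := by
    rw [angle_smul_left_of_pos _ _ px, angle_smul_right_of_pos _ _ py]
  have h3 : angle y z = angle (‖y‖⁻¹ • y) (‖z‖⁻¹ • z) := by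
    rw [angle_smul_left_of_pos _ _ py, angle_smul_right_of_pos _ _ pz]
  rw [h1, h2, h3]
  exact unit_angle_triangle (norm_smul_inv_norm hx) (norm_smul_inv_norm hy)
    (norm_smul_inv_norm hz)

private lemma chord_le_angle {a b : V} (ha : a ≠ 0) (hb : b ≠ 0) :
    ‖‖a‖⁻¹ • a - ‖b‖⁻¹ • b‖ ≤ angle a b := by
  have pa : (0:ℝ) < ‖a‖⁻¹ := inv_pos.mpr (norm_pos_iff.mpr ha)
  have pb : (0:ℝ) < ‖b‖⁻¹ := inv_pos.mpr (norm_pos_iff.mpr hb)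
  set u := ‖a‖⁻¹ • a with hu
  set v := ‖b‖⁻¹ • b with hv
  have hun : ‖u‖ = 1 := norm_smul_inv_norm ha
  have hvn : ‖v‖ = 1 := norm_smul_inv_norm hb
  have hang : angle a b = angle u v := by
    rw [hu, hv, angle_smul_left_of_pos _ _ pa, angle_smul_right_of_pos _ _ pb]
  rw [hang]
  set θ := angle u v with hθ
  have hθ0 : 0 ≤ θ := angle_nonneg u v
  have hθπ : θ ≤ Real.pi := angle_le_pi u v
  have hcos : Real.cos θ = ⟪u, v⟫ := by rw [hθ, cos_angle, hun, hvn]; ring_nf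
  have hsq : ‖u - v‖ ^ 2 = 2 - 2 * Real.cos θ := by
    rw [norm_sub_sq_real, hun, hvn, hcos]; ring
  have h2 : Real.sin (θ / 2) ^ 2 = 1 / 2 - Real.cos θ / 2 := by
    have h3 := Real.sin_sq_eq_half_sub (θ / 2)
    rwa [show 2 * (θ / 2) = θ by ring] at h3
  have hsn : 0 ≤ Real.sin (θ / 2) :=
    Real.sin_nonneg_of_nonneg_of_le_pi (by linarith) (by linarith [Real.pi_pos])
  have hsin : ‖u - v‖ = 2 * Real.sin (θ / 2) := by
    nlinarith [norm_nonneg (u - v)]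
  rw [hsin]
  have := Real.sin_le (show (0:ℝ) ≤ θ / 2 by linarith)
  linarith

private lemma polygon_angle_sum {N : ℕ} [NeZero N] (w : Fin N → V) (p : V)
    (hne : ∀ i, w (i + 1) ≠ w i) (hp : ∀ i, w i ≠ p) :
    ∑ i, angle (w i - p) (w (i + 1) - p) ≤
      ∑ i, angle (w (i + 1) - w i) (w (i + 2) - w (i + 1)) := by
  set γ : Fin N → ℝ := fun i => angle (w i - p) (w (i + 1) - p) with hγ
  set α : Fin N → ℝ := fun i => angle (p - w i) (w (i + 1) - w i) with hα
  set β : Fin N → ℝ := fun i => angle (w i - w (i + 1)) (p - w (i + 1)) with hβ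
  set e : Fin N → ℝ := fun i => angle (w (i + 1) - w i) (w (i + 2) - w (i + 1)) with he
  have h1 : ∀ i, γ i + β i + α i = Real.pi := by
    intro i
    have := EuclideanGeometry.angle_add_angle_add_angle_eq_pi (V := V)
      (p₁ := w i) (p₂ := p) (p₃ := w (i + 1)) (hp i).symm
    simp only [EuclideanGeometry.angle, vsub_eq_sub] at this
    rw [hγ, hβ, hα]
    dsimp only
    rw [angle_comm (p - w (i+1)) (w i - w (i+1)), angle_comm (w (i+1) - w i) (p - w i)] at this
    linarith
  have h2 : ∀ i, Real.pi - β i - α (i + 1) ≤ e i := by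
    intro i
    have hneg : angle (w i - w (i + 1)) (w (i + 2) - w (i + 1)) = Real.pi - e i := by
      rw [he]
      dsimp only
      rw [← neg_sub (w (i + 1)) (w i), angle_neg_left]
    have htri := angle_triangle' (w i - w (i + 1)) (p - w (i + 1)) (w (i + 2) - w (i + 1))
    rw [hneg] at htri
    have : α (i + 1) = angle (p - w (i + 1)) (w (i + 2) - w (i + 1)) := by
      rw [hα]; dsimp only
      rw [add_assoc, show (1 : Fin N) + 1 = 2 from by open Fin.NatCast in exact one_add_one_eq_two]
    rw [this]
    rw [hβ]; dsimp only
    linarith [htri]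
  have hshift : ∑ i : Fin N, α (i + 1) = ∑ i, α i :=
    Fintype.sum_equiv (Equiv.addRight 1) _ _ (fun i => rfl)
  have hA : ∑ i, γ i = ∑ i, (Real.pi - β i - α i) := by
    refine Finset.sum_congr rfl fun i _ => ?_
    have := h1 i; linarith
  have hB : ∑ i, (Real.pi - β i - α (i + 1)) ≤ ∑ i, e i :=
    Finset.sum_le_sum fun i _ => h2 i
  have hC : ∑ i, (Real.pi - β i - α (i + 1)) = ∑ i, (Real.pi - β i - α i) := by
    simp only [Finset.sum_sub_distrib, hshift]
  rw [hA, ← hC]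
  exact hB

private lemma inscribed_le_TC (K : ℝ → EuclideanSpace ℝ (Fin 3))
    (p : EuclideanSpace ℝ (Fin 3)) (hpK : p ∉ Set.range K) (n : ℕ) (t : Fin (n + 3) → ℝ)
    (h1 : StrictMono t) (h2 : ∀ i, t i ∈ Ico (0:ℝ) 1) (h3 : ∀ i, K (t (i + 1)) ≠ K (t i)) :
    ∑ i : Fin (n + 3), ENNReal.ofReal (angle (K (t i) - p) (K (t (i + 1)) - p)) ≤
      totalCurvature K := by
  have hsum : ∑ i : Fin (n + 3), angle (K (t i) - p) (K (t (i + 1)) - p)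
      ≤ ∑ i : Fin (n + 3), angle (K (t (i + 1)) - K (t i)) (K (t (i + 2)) - K (t (i + 1))) :=
    polygon_angle_sum (fun i => K (t i)) p (fun i => h3 i)
      (fun i h => hpK ⟨t i, h.symm ▸ rfl⟩)
  calc ∑ i : Fin (n + 3), ENNReal.ofReal (angle (K (t i) - p) (K (t (i + 1)) - p))
      = ENNReal.ofReal (∑ i : Fin (n + 3), angle (K (t i) - p) (K (t (i + 1)) - p)) := by
        rw [ENNReal.ofReal_sum_of_nonneg (fun i _ => angle_nonneg _ _)]
    _ ≤ ENNReal.ofReal (∑ i : Fin (n + 3),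
          angle (K (t (i + 1)) - K (t i)) (K (t (i + 2)) - K (t (i + 1)))) :=
        ENNReal.ofReal_le_ofReal hsum
    _ = ∑ i : Fin (n + 3), ENNReal.ofReal
          (angle (K (t (i + 1)) - K (t i)) (K (t (i + 2)) - K (t (i + 1)))) := by
        rw [ENNReal.ofReal_sum_of_nonneg (fun i _ => angle_nonneg _ _)]
    _ ≤ totalCurvature K := by
        unfold totalCurvature
        exact le_iSup_of_le n (le_iSup_of_le t (le_iSup_of_le h1
          (le_iSup_of_le h2 (le_iSup_of_le h3 le_rfl))))


end Auxiliary

section Auxiliary2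

open InnerProductGeometry
open scoped RealInnerProductSpace

private lemma edge_bound (K : ℝ → EuclideanSpace ℝ (Fin 3)) (p : EuclideanSpace ℝ (Fin 3)) (hpK : p ∉ Set.range K) (x y : ℝ) :
    edist (‖K y - p‖⁻¹ • (K y - p)) (‖K x - p‖⁻¹ • (K x - p)) ≤
      ENNReal.ofReal (angle (K x - p) (K y - p)) := by
  have hx : K x - p ≠ 0 := sub_ne_zero.mpr (fun h => hpK ⟨x, h⟩)
  have hy : K y - p ≠ 0 := sub_ne_zero.mpr (fun h => hpK ⟨y, h⟩)
  rw [edist_dist, dist_eq_norm]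
  apply ENNReal.ofReal_le_ofReal
  rw [angle_comm]
  exact chord_le_angle hy hx

private lemma chain_le (K : ℝ → EuclideanSpace ℝ (Fin 3)) (p : EuclideanSpace ℝ (Fin 3))
    (hK : Continuous K) (hper : Function.Periodic K 1) (hpK : p ∉ Set.range K) :
    ∀ M : ℕ, ∀ v : ℕ → ℝ, (∀ i, i < M → v i ≤ v (i + 1)) →
      (∀ i, i ≤ M → v i ∈ Icc (0:ℝ) 1) → v 0 = 0 → v M = 1 →
      ∑ i ∈ Finset.range M, edist (‖K (v (i + 1)) - p‖⁻¹ • (K (v (i + 1)) - p))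
        (‖K (v i) - p‖⁻¹ • (K (v i) - p)) ≤ totalCurvature K := by
  have hK10 : K 1 = K 0 := by simpa using hper 0
  intro M
  induction M using Nat.strong_induction_on with
  | _ M IH =>
  rcases M with _ | _ | m
  · simp
  · intro v hmono hmem h0 hM
    have h10 : K (v 1) = K (v 0) := by rw [hM, h0, hK10]
    simp [h10]
  intro v hmono hmem h0 hM
  set f : ℝ → EuclideanSpace ℝ (Fin 3) := fun t => ‖K t - p‖⁻¹ • (K t - p) with hf
  by_cases hdeg : ∃ e, e < m + 2 ∧ K (v (e + 1)) = K (v e)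
  · -- degenerate: delete a vertex
    have hdd : ∃ d, d + 2 ≤ m + 2 ∧
        (K (v (d + 1)) = K (v d) ∨ K (v (d + 1)) = K (v (d + 2))) := by
      obtain ⟨e, heM, heq⟩ := hdeg
      rcases Nat.eq_zero_or_pos e with rfl | hpos
      · exact ⟨0, by omega, Or.inl heq⟩
      · refine ⟨e - 1, by omega, Or.inr ?_⟩
        rw [show e - 1 + 1 = e by omega, show e - 1 + 2 = e + 1 by omega]
        exact heq.symm
    obtain ⟨d, hdM, hKd⟩ := hdd
    set v' : ℕ → ℝ := fun i => if i < d + 1 then v i else v (i + 1) with hv'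
    have hfeq : f (v (d + 1)) = f (v d) ∨ f (v (d + 1)) = f (v (d + 2)) := by
      rcases hKd with h | h
      · left; simp only [hf, h]
      · right; simp only [hf, h]
    have hmono' : ∀ i, i < m + 1 → v' i ≤ v' (i + 1) := by
      intro i hi
      by_cases h1 : i + 1 < d + 1
      · simp only [hv', if_pos (by omega : i < d + 1), if_pos h1]
        exact hmono i (by omega)
      by_cases h2 : i < d + 1
      · simp only [hv', if_pos h2, if_neg h1]
        have hid : i = d := by omega
        subst hid
        exact le_trans (hmono i (by omega)) (hmono (i + 1) (by omega))
      · simp only [hv', if_neg h2, if_neg h1]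
        exact hmono (i + 1) (by omega)
    have hmem' : ∀ i, i ≤ m + 1 → v' i ∈ Icc (0:ℝ) 1 := by
      intro i hi
      by_cases h1 : i < d + 1
      · simp only [hv', if_pos h1]; exact hmem i (by omega)
      · simp only [hv', if_neg h1]; exact hmem (i + 1) (by omega)
    have h0' : v' 0 = 0 := by
      simp only [hv', if_pos (by omega : 0 < d + 1)]; exact h0
    have hM' : v' (m + 1) = 1 := by
      simp only [hv', if_neg (by omega : ¬ m + 1 < d + 1)]
      exact hM
    have hsum_eq :
        ∑ i ∈ Finset.range (m + 2), edist (f (v (i + 1))) (f (v i)) =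
        ∑ i ∈ Finset.range (m + 1), edist (f (v' (i + 1))) (f (v' i)) := by
      obtain ⟨k, hk⟩ : ∃ k, m + 2 = (d + 2) + k := ⟨m - d, by omega⟩
      have hk1 : m + 1 = (d + 1) + k := by omega
      have e1 : v' d = v d := by simp only [hv', if_pos (by omega : d < d + 1)]
      have e2 : v' (d + 1) = v (d + 2) := by
        simp only [hv', if_neg (by omega : ¬ d + 1 < d + 1)]
      have hgd : edist (f (v' (d + 1))) (f (v' d)) =
          edist (f (v (d + 1))) (f (v d)) + edist (f (v (d + 2))) (f (v (d + 1))) := by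
        rw [e1, e2]
        rcases hfeq with h | h <;> rw [h] <;> simp [edist_self]
      have c1 : ∀ i, i < d → edist (f (v' (i + 1))) (f (v' i)) =
          edist (f (v (i + 1))) (f (v i)) := by
        intro i hi
        simp only [hv', if_pos (by omega : i < d + 1), if_pos (by omega : i + 1 < d + 1)]
      have c3 : ∀ i, edist (f (v' (d + 1 + i + 1))) (f (v' (d + 1 + i))) =
          edist (f (v (d + 2 + i + 1))) (f (v (d + 2 + i))) := by
        intro i
        simp only [hv', if_neg (by omega : ¬ d + 1 + i < d + 1),
          if_neg (by omega : ¬ d + 1 + i + 1 < d + 1)]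
        rw [show d + 1 + i + 1 = d + 2 + i by omega, show d + 2 + i + 1 = d + 1 + i + 1 + 1 by omega]
      have L : ∑ i ∈ Finset.range (m + 2), edist (f (v (i + 1))) (f (v i)) =
          (∑ i ∈ Finset.range d, edist (f (v (i + 1))) (f (v i)) +
            edist (f (v (d + 1))) (f (v d)) + edist (f (v (d + 1 + 1))) (f (v (d + 1)))) +
          ∑ i ∈ Finset.range k, edist (f (v (d + 1 + 1 + i + 1))) (f (v (d + 1 + 1 + i))) := by
        rw [show m + 2 = d + 1 + 1 + k by omega, Finset.sum_range_add,
          Finset.sum_range_succ, Finset.sum_range_succ]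
      have R : ∑ i ∈ Finset.range (m + 1), edist (f (v' (i + 1))) (f (v' i)) =
          (∑ i ∈ Finset.range d, edist (f (v' (i + 1))) (f (v' i)) +
            edist (f (v' (d + 1))) (f (v' d))) +
          ∑ i ∈ Finset.range k, edist (f (v' (d + 1 + i + 1))) (f (v' (d + 1 + i))) := by
        rw [show m + 1 = d + 1 + k by omega, Finset.sum_range_add, Finset.sum_range_succ]
      have r1 : ∑ i ∈ Finset.range d, edist (f (v' (i + 1))) (f (v' i)) =
          ∑ i ∈ Finset.range d, edist (f (v (i + 1))) (f (v i)) :=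
        Finset.sum_congr rfl fun i hi => c1 i (Finset.mem_range.mp hi)
      have r3 : ∑ i ∈ Finset.range k, edist (f (v' (d + 1 + i + 1))) (f (v' (d + 1 + i))) =
          ∑ i ∈ Finset.range k, edist (f (v (d + 1 + 1 + i + 1))) (f (v (d + 1 + 1 + i))) := by
        refine Finset.sum_congr rfl fun i _ => ?_
        rw [c3 i, show d + 2 + i + 1 = d + 1 + 1 + i + 1 by omega,
          show d + 2 + i = d + 1 + 1 + i by omega]
      rw [L, R, r1, r3, hgd, show d + 1 + 1 = d + 2 by omega]
      ring
    calc ∑ i ∈ Finset.range (m + 2), edist (f (v (i + 1))) (f (v i))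
        = ∑ i ∈ Finset.range (m + 1), edist (f (v' (i + 1))) (f (v' i)) := hsum_eq
      _ ≤ totalCurvature K := IH (m + 1) (by omega) v' hmono' hmem' h0' hM'
  · -- nondegenerate
    push_neg at hdeg
    have hlt : ∀ i, i < m + 2 → v i < v (i + 1) := by
      intro i hi
      refine lt_of_le_of_ne (hmono i hi) fun hv => (hdeg i hi (by rw [← hv]))
    have key : ∀ j, j ≤ m + 2 → ∀ i, i < j → v i < v j := by
      intro j
      induction j with
      | zero => omega
      | succ j ihj =>
        intro hj i hi
        rcases Nat.lt_succ_iff_lt_or_eq.mp hi with h | h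
        · exact lt_trans (ihj (by omega) i h) (hlt j (by omega))
        · subst h; exact hlt i (by omega)
    rcases m with _ | n
    · -- M = 2, a genuine 2-gon: need an auxiliary third point by IVT
      have hv2 : v 2 = 1 := hM
      have hb : K (v 1) ≠ K 0 := by
        have := hdeg 0 (by omega)
        rwa [h0] at this
      have hv10 : 0 < v 1 := by have := hlt 0 (by omega); rwa [h0] at this
      have hv11 : v 1 < 1 := by have := hlt 1 (by omega); rwa [hv2] at this
      have hba : (0:ℝ) < ‖K (v 1) - K 0‖ := by
        rw [norm_pos_iff]; exact sub_ne_zero.mpr hb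
      have hcont : ContinuousOn (fun x => ‖K x - K 0‖) (Icc 0 (v 1)) :=
        ((hK.sub continuous_const).norm).continuousOn
      have hivt := intermediate_value_Icc (le_of_lt hv10) hcont
      have hmem2 : ‖K (v 1) - K 0‖ / 2 ∈ Icc (‖K 0 - K 0‖) (‖K (v 1) - K 0‖) := by
        rw [sub_self, norm_zero]
        constructor <;> [positivity; linarith]
      obtain ⟨s, hsmem, hgs⟩ := hivt hmem2
      simp only at hgs
      have hKsa : K s ≠ K 0 := by
        intro h
        rw [h, sub_self, norm_zero] at hgs
        linarith
      have hKsb : K s ≠ K (v 1) := by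
        intro h
        rw [h] at hgs
        linarith
      have hs0 : 0 < s := by
        rcases eq_or_lt_of_le hsmem.1 with h | h
        · exact absurd (by rw [← h]) hKsa
        · exact h
      have hs1 : s < v 1 := by
        rcases eq_or_lt_of_le hsmem.2 with h | h
        · exact absurd (by rw [h]) hKsb
        · exact h
      set t : Fin (0 + 3) → ℝ := ![0, s, v 1] with ht
      have ht0 : t 0 = 0 := rfl
      have ht1 : t 1 = s := rfl
      have ht2 : t 2 = v 1 := rfl
      have hmono_t : StrictMono t := by
        rw [Fin.strictMono_iff_lt_succ]
        intro i
        fin_cases i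
        · show t 0 < t 1
          rw [ht0, ht1]; exact hs0
        · show t 1 < t 2
          rw [ht1, ht2]; exact hs1
      have hmem_t : ∀ i, t i ∈ Ico (0:ℝ) 1 := by
        intro i
        fin_cases i
        · show t 0 ∈ Ico (0:ℝ) 1
          rw [ht0]; exact ⟨le_refl _, by norm_num⟩
        · show t 1 ∈ Ico (0:ℝ) 1
          rw [ht1]; exact ⟨hs0.le, lt_trans hs1 hv11⟩
        · show t 2 ∈ Ico (0:ℝ) 1
          rw [ht2]; exact ⟨hv10.le, hv11⟩
      have h3t : ∀ i : Fin (0 + 3), K (t (i + 1)) ≠ K (t i) := by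
        intro i
        fin_cases i
        · show K (t 1) ≠ K (t 0)
          rw [ht0, ht1]; exact hKsa
        · show K (t 2) ≠ K (t 1)
          rw [ht1, ht2]; exact Ne.symm hKsb
        · show K (t 0) ≠ K (t 2)
          rw [ht0, ht2]; exact hb.symm
      have t1 : edist (f (v 1)) (f (v 0)) ≤
          ENNReal.ofReal (angle (K 0 - p) (K (v 1) - p)) := by
        rw [h0]
        exact edge_bound K p hpK 0 (v 1)
      have t2 : edist (f (v 2)) (f (v 1)) ≤
          ENNReal.ofReal (angle (K (v 1) - p) (K 0 - p)) := by
        have hfv2 : f (v 2) = f 0 := by rw [hv2]; simp only [hf, hK10]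
        rw [hfv2]
        exact edge_bound K p hpK (v 1) 0
      have tri : angle (K 0 - p) (K (v 1) - p) ≤
          angle (K 0 - p) (K s - p) + angle (K s - p) (K (v 1) - p) :=
        angle_triangle' _ _ _
      have hexp : ∑ i : Fin (0 + 3),
          ENNReal.ofReal (angle (K (t i) - p) (K (t (i + 1)) - p)) =
          ENNReal.ofReal (angle (K 0 - p) (K s - p)) +
          ENNReal.ofReal (angle (K s - p) (K (v 1) - p)) +
          ENNReal.ofReal (angle (K (v 1) - p) (K 0 - p)) := by
        rw [show ∑ i : Fin (0 + 3),
            ENNReal.ofReal (angle (K (t i) - p) (K (t (i + 1)) - p)) =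
            ENNReal.ofReal (angle (K (t 0) - p) (K (t (0 + 1)) - p)) +
            ENNReal.ofReal (angle (K (t 1) - p) (K (t (1 + 1)) - p)) +
            ENNReal.ofReal (angle (K (t 2) - p) (K (t (2 + 1)) - p)) from
          Fin.sum_univ_three _]
        rw [show (0 : Fin 3) + 1 = 1 from rfl, show (1 : Fin 3) + 1 = 2 from rfl,
          show (2 : Fin 3) + 1 = 0 from rfl, ht0, ht1, ht2]
      show ∑ i ∈ Finset.range 2, edist (f (v (i + 1))) (f (v i)) ≤ totalCurvature K
      rw [Finset.sum_range_succ, Finset.sum_range_one]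
      calc edist (f (v (0 + 1))) (f (v 0)) + edist (f (v (1 + 1))) (f (v 1))
          ≤ ENNReal.ofReal (angle (K 0 - p) (K (v 1) - p)) +
            ENNReal.ofReal (angle (K (v 1) - p) (K 0 - p)) := add_le_add t1 t2
        _ ≤ (ENNReal.ofReal (angle (K 0 - p) (K s - p)) +
            ENNReal.ofReal (angle (K s - p) (K (v 1) - p))) +
            ENNReal.ofReal (angle (K (v 1) - p) (K 0 - p)) := by
            refine add_le_add ?_ le_rfl
            refine (ENNReal.ofReal_le_ofReal tri).trans (le_of_eq ?_)
            exact ENNReal.ofReal_add (angle_nonneg _ _) (angle_nonneg _ _)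
        _ = ∑ i : Fin (0 + 3),
            ENNReal.ofReal (angle (K (t i) - p) (K (t (i + 1)) - p)) := by
            rw [hexp]
        _ ≤ totalCurvature K := inscribed_le_TC K p hpK 0 t hmono_t hmem_t h3t
    · -- M = n + 3
      set t : Fin (n + 3) → ℝ := fun j => v j.val with ht
      have hmono_t : StrictMono t := by
        intro i j hij
        exact key j.val (by omega) i.val (Fin.lt_def.mp hij)
      have hmem_t : ∀ i, t i ∈ Ico (0:ℝ) 1 := by
        intro i
        refine ⟨(hmem i.val (by omega)).1, ?_⟩
        have h1 : v (n + 3) = 1 := hM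
        have h2 := key (n + 3) (by omega) i.val (by omega)
        rw [← h1]
        exact h2
      have hwrap : ∀ i : Fin (n + 3), K (t (i + 1)) = K (v (i.val + 1)) := by
        intro i
        by_cases hi : i.val + 1 < n + 3
        · have hlast : i < Fin.last (n + 2) := by
            rw [Fin.lt_def]; simp only [Fin.val_last]; omega
          have hv1 := Fin.val_add_one_of_lt hlast
          simp only [ht]
          rw [hv1]
        · have hval : i.val = n + 2 := by have := i.isLt; omega
          have hi' : i = Fin.last (n + 2) := Fin.ext (by simp [hval])
          subst hi'
          rw [Fin.last_add_one]
          simp only [ht, Fin.val_zero, Fin.val_last]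
          rw [h0, show (n + 2) + 1 = n + 1 + 2 from rfl, hM, hK10]
      have h3t : ∀ i : Fin (n + 3), K (t (i + 1)) ≠ K (t i) := by
        intro i
        rw [hwrap i]
        exact hdeg i.val (by omega)
      calc ∑ i ∈ Finset.range (n + 1 + 2), edist (f (v (i + 1))) (f (v i))
          = ∑ i : Fin (n + 3), edist (f (v (i.val + 1))) (f (v i.val)) := by
            rw [← Fin.sum_univ_eq_sum_range (fun k => edist (f (v (k + 1))) (f (v k))) (n + 3)]
        _ ≤ ∑ i : Fin (n + 3), ENNReal.ofReal (angle (K (t i) - p) (K (t (i + 1)) - p)) := by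
            refine Finset.sum_le_sum fun i _ => ?_
            rw [hwrap i]
            exact edge_bound K p hpK (v i.val) (v (i.val + 1))
        _ ≤ totalCurvature K := inscribed_le_TC K p hpK n t hmono_t hmem_t h3t


end Auxiliary2

open InnerProductGeometry in
open scoped RealInnerProductSpace in
/-- The cone angle of a closed rectifiable curve `K` of finite
total curvature, seen from any point `p` not on `K` — i.e. the length of the
radial projection of `K` to the unit sphere about `p` — is at most the total
curvature of `K`. -/
theorem coneAngle_le_totalCurvature
    (K : ℝ → EuclideanSpace ℝ (Fin 3))
    (hK : Continuous K) (hper : Function.Periodic K 1)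
    (hrect : eVariationOn K (Icc (0 : ℝ) 1) ≠ ⊤)
    (hfin : totalCurvature K ≠ ⊤)
    (p : EuclideanSpace ℝ (Fin 3)) (hpK : p ∉ Set.range K) :
    eVariationOn (fun t => ‖K t - p‖⁻¹ • (K t - p)) (Icc (0 : ℝ) 1) ≤
      totalCurvature K := by
  set f : ℝ → EuclideanSpace ℝ (Fin 3) := fun t => ‖K t - p‖⁻¹ • (K t - p) with hf
  unfold eVariationOn
  refine iSup_le ?_
  rintro ⟨n, u, hu, us⟩
  dsimp only
  set v : ℕ → ℝ := fun i => if i = 0 then 0 else if i ≤ n + 1 then u (i - 1) else 1 with hv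
  have h0v : v 0 = 0 := by simp only [hv, if_pos rfl]
  have hMv : v (n + 2) = 1 := by
    simp only [hv, if_neg (by omega : ¬ n + 2 = 0), if_neg (by omega : ¬ n + 2 ≤ n + 1)]
  have hchain : ∀ i, i < n + 2 → v i ≤ v (i + 1) := by
    intro i hi
    rcases Nat.eq_zero_or_pos i with rfl | hpos
    · simp only [hv, if_pos rfl, if_neg (by omega : ¬ (0:ℕ) + 1 = 0),
        if_pos (by omega : 0 + 1 ≤ n + 1)]
      exact (us (0 + 1 - 1)).1
    rcases Nat.lt_or_ge i (n + 1) with hlt | hge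
    · simp only [hv, if_neg (by omega : ¬ i = 0), if_pos (by omega : i ≤ n + 1),
        if_neg (by omega : ¬ i + 1 = 0), if_pos (by omega : i + 1 ≤ n + 1)]
      exact hu (by omega : i - 1 ≤ i + 1 - 1)
    · have hieq : i = n + 1 := by omega
      subst hieq
      simp only [hv, if_neg (by omega : ¬ n + 1 = 0), if_pos (le_refl (n + 1)),
        if_neg (by omega : ¬ n + 1 + 1 = 0), if_neg (by omega : ¬ n + 1 + 1 ≤ n + 1)]
      exact (us (n + 1 - 1)).2
  have hmemv : ∀ i, i ≤ n + 2 → v i ∈ Icc (0:ℝ) 1 := by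
    intro i _
    rcases Nat.eq_zero_or_pos i with rfl | hpos
    · simp only [hv, if_pos rfl]
      exact ⟨le_refl _, by norm_num⟩
    rcases Nat.lt_or_ge i (n + 2) with hlt | hge
    · simp only [hv, if_neg (by omega : ¬ i = 0), if_pos (by omega : i ≤ n + 1)]
      exact us (i - 1)
    · simp only [hv, if_neg (by omega : ¬ i = 0), if_neg (by omega : ¬ i ≤ n + 1)]
      exact ⟨by norm_num, le_refl _⟩
  calc ∑ i ∈ Finset.range n, edist (f (u (i + 1))) (f (u i))
      = ∑ i ∈ Finset.Ico 1 (n + 1), edist (f (v (i + 1))) (f (v i)) := by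
        rw [Finset.sum_Ico_eq_sum_range, show n + 1 - 1 = n by omega]
        refine Finset.sum_congr rfl fun i hi => ?_
        have hi' := Finset.mem_range.mp hi
        have e1 : v (1 + i) = u i := by
          simp only [hv, if_neg (by omega : ¬ 1 + i = 0), if_pos (by omega : 1 + i ≤ n + 1)]
          rw [show 1 + i - 1 = i by omega]
        have e2 : v (1 + i + 1) = u (i + 1) := by
          simp only [hv, if_neg (by omega : ¬ 1 + i + 1 = 0),
            if_pos (by omega : 1 + i + 1 ≤ n + 1)]
          rw [show 1 + i + 1 - 1 = i + 1 by omega]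
        rw [e1, e2]
    _ ≤ ∑ i ∈ Finset.range (n + 2), edist (f (v (i + 1))) (f (v i)) := by
        refine Finset.sum_le_sum_of_subset ?_
        intro x hx
        rw [Finset.mem_Ico] at hx
        rw [Finset.mem_range]
        omega
    _ ≤ totalCurvature K := chain_le K p hK hper hpK (n + 2) v hchain hmemv h0v hMv
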